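/- For each n ≥ 1 let Id_n denote the 1-relation (Fin n, Fin n, v_n) where v_n(x,y) = 1 if x = y and v_n(x,y) = 0 otherwise. Then: (a) each Id_n is reduced; (b) for n ≠ m there is no isomorphism of 1-relations Id_n ≅ Id_m; (c) for n ≠ m, Id_n and Id_m are not equivalent under the equivalence relation ≈ generated by existence of a morphism of 1-relations. Consequently there are infinitely many ≈-classes of 1-relations and infinitely many isomorphism classes of reduced 1-relations. -/

import Mathlib

/-- A `k`-relation: nonempty finite types `F`, `G` and a map `v : F × G → Fin (k+1)`
with no identically zero row or column. -/
structure KRel (k : ℕ) where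
  F : Type
  G : Type
  [finF : Fintype F]
  [finG : Fintype G]
  [neF : Nonempty F]
  [neG : Nonempty G]
  v : F × G → Fin (k + 1)
  hrow : ∀ x : F, ∃ y : G, v (x, y) ≠ 0
  hcol : ∀ y : G, ∃ x : F, v (x, y) ≠ 0

attribute [instance] KRel.finF KRel.finG KRel.neF KRel.neG

/-- A morphism of `k`-relations: a pair of surjections compatible with the values. -/
def IsHom {k : ℕ} (C C' : KRel k) (f : C.F → C'.F) (g : C.G → C'.G) : Prop :=
  Function.Surjective f ∧ Function.Surjective g ∧
    ∀ (x : C.F) (y : C.G), C'.v (f x, g y) = C.v (x, y)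

/-- A `k`-relation is reduced if no two rows and no two columns coincide. -/
def Reduced {k : ℕ} (C : KRel k) : Prop :=
  (∀ x x' : C.F, (∀ y, C.v (x, y) = C.v (x', y)) → x = x') ∧
  (∀ y y' : C.G, (∀ x, C.v (x, y) = C.v (x, y')) → y = y')

/-- The equivalence relation on rows: equality of the corresponding row of `v`. -/
def rowSetoid {k : ℕ} (C : KRel k) : Setoid C.F where
  r x x' := ∀ y, C.v (x, y) = C.v (x', y)
  iseqv := ⟨fun _ _ => rfl, fun h y => (h y).symm, fun h h' y => (h y).trans (h' y)⟩

/-- The equivalence relation on columns: equality of the corresponding column of `v`. -/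
def colSetoid {k : ℕ} (C : KRel k) : Setoid C.G where
  r y y' := ∀ x, C.v (x, y) = C.v (x, y')
  iseqv := ⟨fun _ _ => rfl, fun h x => (h x).symm, fun h h' x => (h x).trans (h' x)⟩

/-- The canonical reduction `r(C)` of a `k`-relation `C`. -/
noncomputable def reduce {k : ℕ} (C : KRel k) : KRel k where
  F := Quotient (rowSetoid C)
  G := Quotient (colSetoid C)
  finF := Fintype.ofFinite _
  finG := Fintype.ofFinite _
  neF := ⟨Quotient.mk _ (Classical.arbitrary _)⟩
  neG := ⟨Quotient.mk _ (Classical.arbitrary _)⟩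
  v := fun p =>
    Quotient.liftOn₂ p.1 p.2 (fun x y => C.v (x, y))
      (fun _ y x' _ hx hy => (hx y).trans (hy x'))
  hrow := fun qx =>
    Quotient.inductionOn qx fun x =>
      let ⟨y, hy⟩ := C.hrow x
      ⟨Quotient.mk (colSetoid C) y, hy⟩
  hcol := fun qy =>
    Quotient.inductionOn qy fun y =>
      let ⟨x, hx⟩ := C.hcol y
      ⟨Quotient.mk (rowSetoid C) x, hx⟩

/-- An isomorphism of `k`-relations: a morphism whose two components are bijections. -/
def IsIso {k : ℕ} (C C' : KRel k) : Prop :=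
  ∃ (f : C.F → C'.F) (g : C.G → C'.G),
    IsHom C C' f g ∧ Function.Bijective f ∧ Function.Bijective g

/-- The identity `1`-relation `Id_n` on a set with `n ≥ 1` elements. -/
def IdRel (n : ℕ) (hn : 0 < n) : KRel 1 where
  F := Fin n
  G := Fin n
  neF := ⟨⟨0, hn⟩⟩
  neG := ⟨⟨0, hn⟩⟩
  v := fun p => if p.1 = p.2 then 1 else 0
  hrow := fun x => ⟨x, by simp⟩
  hcol := fun y => ⟨y, by simp⟩

/-- The invariant: number of distinct rows. -/
noncomputable def NInv (C : KRel 1) : ℕ := Fintype.card (reduce C).F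

lemma NInv_hom {C C' : KRel 1} (h : ∃ f g, IsHom C C' f g) : NInv C = NInv C' := by
  obtain ⟨f, g, hf, hg, hv⟩ := h
  have wd : ∀ x x' : C.F, (rowSetoid C).r x x' →
      (Quotient.mk (rowSetoid C') (f x)) = Quotient.mk (rowSetoid C') (f x') := by
    intro x x' hxx'
    refine Quotient.sound fun y' => ?_
    obtain ⟨y, rfl⟩ := hg y'
    rw [hv, hv, hxx' y]
  refine Fintype.card_of_bijective
    (f := (Quotient.lift (fun x => Quotient.mk (rowSetoid C') (f x)) wd :
      (reduce C).F → (reduce C').F)) ⟨?_, ?_⟩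
  · refine fun a b => Quotient.inductionOn₂ a b fun x x' h => ?_
    have h' := Quotient.exact h
    refine Quotient.sound fun y => ?_
    have := h' (g y)
    rwa [hv, hv] at this
  · intro q
    refine Quotient.inductionOn q fun x' => ?_
    obtain ⟨x, rfl⟩ := hf x'
    exact ⟨Quotient.mk _ x, rfl⟩

lemma reduced_IdRel (n : ℕ) (hn : 0 < n) : Reduced (IdRel n hn) := by
  constructor
  · intro x x' h
    by_contra hne
    have := h x'
    simp only [IdRel] at this
    split_ifs at this <;> simp_all <;> contradiction
  · intro y y' h
    by_contra hne
    have := h y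
    simp only [IdRel] at this
    split_ifs at this <;> simp_all <;> contradiction

lemma NInv_IdRel (n : ℕ) (hn : 0 < n) : NInv (IdRel n hn) = n := by
  have hb : Function.Bijective
      (Quotient.mk (rowSetoid (IdRel n hn)) : (IdRel n hn).F → (reduce (IdRel n hn)).F) := by
    constructor
    · intro x x' h
      exact (reduced_IdRel n hn).1 x x' (Quotient.exact h)
    · intro q; exact Quotient.inductionOn q fun x => ⟨x, rfl⟩
  rw [NInv, ← Fintype.card_of_bijective (β := (reduce (IdRel n hn)).F) hb]
  exact Fintype.card_fin n

lemma NInv_eqvGen {C C' : KRel 1}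
    (h : Relation.EqvGen (fun C C' : KRel 1 => ∃ f g, IsHom C C' f g) C C') :
    NInv C = NInv C' := by
  induction h with
  | rel _ _ h => exact NInv_hom h
  | refl => rfl
  | symm _ _ _ ih => exact ih.symm
  | trans _ _ _ _ _ ih ih' => exact ih.trans ih'

lemma card_iso {C C' : KRel 1} (h : IsIso C C') : Fintype.card C.F = Fintype.card C'.F := by
  obtain ⟨f, _, _, hf, _⟩ := h
  exact Fintype.card_of_bijective hf

/-- the `Id_n` are reduced, pairwise non-isomorphic, and pairwise
inequivalent for the equivalence relation generated by existence of a morphism;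
consequently there are infinitely many equivalence classes of `1`-relations and
infinitely many isomorphism classes of reduced `1`-relations. -/
theorem stmt9 :
    (∀ (n : ℕ) (hn : 0 < n), Reduced (IdRel n hn)) ∧
    (∀ (n m : ℕ) (hn : 0 < n) (hm : 0 < m), n ≠ m → ¬ IsIso (IdRel n hn) (IdRel m hm)) ∧
    (∀ (n m : ℕ) (hn : 0 < n) (hm : 0 < m), n ≠ m →
        ¬ Relation.EqvGen (fun C C' : KRel 1 => ∃ f g, IsHom C C' f g)
            (IdRel n hn) (IdRel m hm)) ∧
    Infinite (Quot (fun C C' : KRel 1 => ∃ f g, IsHom C C' f g)) ∧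
    Infinite (Quot (fun C C' : {D : KRel 1 // Reduced D} => IsIso C.1 C'.1)) := by
  refine ⟨reduced_IdRel, ?_, ?_, ?_, ?_⟩
  · intro n m hn hm hnm hiso
    have := card_iso hiso
    simp only [IdRel, Fintype.card_fin] at this
    exact hnm (by simpa using (Fintype.card_congr' rfl : Fintype.card (Fin n) = Fintype.card (IdRel n hn).F).trans (this.trans (Fintype.card_congr' rfl : Fintype.card (IdRel m hm).F = Fintype.card (Fin m))))
  · intro n m hn hm hnm h
    have := NInv_eqvGen h
    rw [NInv_IdRel, NInv_IdRel] at this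
    exact hnm this
  · refine Infinite.of_injective
      (fun n : ℕ => Quot.mk _ (IdRel (n+1) n.succ_pos)) fun a b h => ?_
    have h2 : NInv (IdRel (a+1) a.succ_pos) = NInv (IdRel (b+1) b.succ_pos) :=
      congrArg (Quot.lift NInv (fun C C' h => NInv_hom h)) h
    rw [NInv_IdRel, NInv_IdRel] at h2
    omega
  · refine Infinite.of_injective
      (fun n : ℕ => Quot.mk _ (⟨IdRel (n+1) n.succ_pos, reduced_IdRel _ _⟩ :
        {D : KRel 1 // Reduced D})) fun a b h => ?_
    have h2 : Fintype.card (Fin (a+1)) = Fintype.card (Fin (b+1)) :=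
      congrArg (Quot.lift (fun C : {D : KRel 1 // Reduced D} => Fintype.card C.1.F)
        (fun C C' h => card_iso h)) h
    simpa using h2
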